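/- Suppose B ∈ ℝ[z,z⁻¹]^{n×n} admits a factorization B = B₋ B₊ where B₋ is a polynomial matrix in z⁻¹ with B₋(z) invertible for all |z| ≥ 1 and lim_{z→∞} B₋(z) = I_n, and B₊ is a polynomial matrix in z with B₊(z) invertible for all |z| ≤ 1. Then the lowest power of z appearing in B₋ equals the lowest power of z appearing in B, and the highest power of z appearing in B₊ equals the highest power of z appearing in B. -/

import Mathlib

/-- Wiener–Hopf factorization `B = B₋ B₊` (zero partial indices): the minimum degree of
`B₋` equals that of `B` and the maximum degree of `B₊` equals that of `B`. Laurent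
polynomial matrices are encoded by their coefficient functions `ℤ → Matrix`. -/
theorem stmt3 {n lam kap : ℕ}
    (Bm Bp B : ℤ → Matrix (Fin n) (Fin n) ℝ)
    -- `B₋` is a polynomial matrix in `z⁻¹` (support in `[-λ, 0]`)
    (hBmsupp : ∀ i : ℤ, Bm i ≠ 0 → -(lam : ℤ) ≤ i ∧ i ≤ 0)
    -- `B₊` is a polynomial matrix in `z` (support in `[0, κ]`)
    (hBpsupp : ∀ i : ℤ, Bp i ≠ 0 → 0 ≤ i ∧ i ≤ (kap : ℤ))
    -- `lim_{z→∞} B₋(z) = I`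
    (hBm0 : Bm 0 = 1)
    -- `B₋(z)` invertible for all `|z| ≥ 1`
    (hBminv : ∀ z : ℂ, 1 ≤ ‖z‖ →
      IsUnit (∑ i ∈ Finset.Icc (-(lam : ℤ)) 0, z ^ i • (Bm i).map (algebraMap ℝ ℂ)))
    -- `B₊(z)` invertible for all `|z| ≤ 1`
    (hBpinv : ∀ z : ℂ, ‖z‖ ≤ 1 →
      IsUnit (∑ i ∈ Finset.Icc (0 : ℤ) (kap : ℤ), z ^ i • (Bp i).map (algebraMap ℝ ℂ)))
    -- `B = B₋ B₊`
    (hB : ∀ i : ℤ, B i = ∑ j ∈ Finset.Icc (-(lam : ℤ)) 0, Bm j * Bp (i - j)) :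
    (∀ μ : ℤ, IsLeast {i | Bm i ≠ 0} μ ↔ IsLeast {i | B i ≠ 0} μ) ∧
    (∀ ν : ℤ, IsGreatest {i | Bp i ≠ 0} ν ↔ IsGreatest {i | B i ≠ 0} ν) := by
  -- `Bp 0` is a unit
  have hBp0 : IsUnit (Bp 0) := by
    have h := hBpinv 0 (by norm_num)
    have hsum : (∑ i ∈ Finset.Icc (0:ℤ) (kap:ℤ), (0:ℂ) ^ i • (Bp i).map (algebraMap ℝ ℂ))
        = (Bp 0).map (algebraMap ℝ ℂ) := by
      rw [Finset.sum_eq_single_of_mem 0 (by simp)]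
      · simp
      · intro i _ hne
        rw [zero_zpow i hne, zero_smul]
    rw [hsum, Matrix.isUnit_iff_isUnit_det, ← RingHom.mapMatrix_apply, ← RingHom.map_det,
      isUnit_iff_ne_zero] at h
    rw [Matrix.isUnit_iff_isUnit_det, isUnit_iff_ne_zero]
    intro hd
    exact h (by rw [hd, map_zero])
  obtain ⟨C, hC⟩ := hBp0.exists_right_inv
  have fwd_min : ∀ μ : ℤ, IsLeast {i | Bm i ≠ 0} μ → IsLeast {i | B i ≠ 0} μ := by
    rintro μ ⟨hμne, hμlb⟩
    constructor
    · have hBμ : B μ = Bm μ * Bp 0 := by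
        rw [hB μ, Finset.sum_eq_single_of_mem μ (Finset.mem_Icc.mpr (hBmsupp μ hμne)),
          sub_self]
        intro j _ hjne
        by_cases hj : Bm j = 0
        · rw [hj, zero_mul]
        · have hjμ : μ ≤ j := hμlb hj
          have : Bp (μ - j) = 0 := by
            by_contra hbp
            have := (hBpsupp _ hbp).1
            omega
          rw [this, mul_zero]
      intro h0
      apply hμne
      calc Bm μ = Bm μ * (Bp 0 * C) := by rw [hC, mul_one]
        _ = B μ * C := by rw [← mul_assoc, ← hBμ]
        _ = 0 := by rw [h0] at *; exact zero_mul C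
    · intro i hi
      by_contra hlt
      push_neg at hlt
      apply hi
      rw [hB i]
      apply Finset.sum_eq_zero
      intro j _
      by_cases hj : Bm j = 0
      · rw [hj, zero_mul]
      · have : Bp (i - j) = 0 := by
          by_contra hbp
          have := (hBpsupp _ hbp).1
          have := hμlb hj
          omega
        rw [this, mul_zero]
  have fwd_max : ∀ ν : ℤ, IsGreatest {i | Bp i ≠ 0} ν → IsGreatest {i | B i ≠ 0} ν := by
    rintro ν ⟨hνne, hνub⟩
    constructor
    · have hBν : B ν = Bp ν := by
        rw [hB ν, Finset.sum_eq_single_of_mem 0 (by simp), sub_zero, hBm0, one_mul]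
        intro j hjmem hjne
        by_cases hj : Bm j = 0
        · rw [hj, zero_mul]
        · have hj0 : j ≤ 0 := (hBmsupp j hj).2
          have : Bp (ν - j) = 0 := by
            by_contra hbp
            have := hνub hbp
            omega
          rw [this, mul_zero]
      rw [Set.mem_setOf_eq, hBν]
      exact hνne
    · intro i hi
      by_contra hlt
      push_neg at hlt
      apply hi
      rw [hB i]
      apply Finset.sum_eq_zero
      intro j hjmem
      by_cases hj : Bm j = 0
      · rw [hj, zero_mul]
      · have hj0 : j ≤ 0 := (hBmsupp j hj).2
        have : Bp (i - j) = 0 := by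
          by_contra hbp
          have := hνub hbp
          omega
        rw [this, mul_zero]
  constructor
  · intro μ
    constructor
    · exact fwd_min μ
    · intro hμ
      by_cases hne : ∃ i, Bm i ≠ 0
      · obtain ⟨μ₀, hμ₀, hμ₀lb⟩ :=
          Int.exists_least_of_bdd (P := fun i => Bm i ≠ 0)
            ⟨-(lam : ℤ), fun z hz => (hBmsupp z hz).1⟩ hne
        have : μ = μ₀ := hμ.unique (fwd_min μ₀ ⟨hμ₀, hμ₀lb⟩)
        rw [this]
        exact ⟨hμ₀, hμ₀lb⟩
      · push_neg at hne
        exfalso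
        apply hμ.1
        rw [hB μ]
        apply Finset.sum_eq_zero
        intro j _
        rw [hne j, zero_mul]
  · intro ν
    constructor
    · exact fwd_max ν
    · intro hν
      by_cases hne : ∃ i, Bp i ≠ 0
      · obtain ⟨ν₀, hν₀, hν₀ub⟩ :=
          Int.exists_greatest_of_bdd (P := fun i => Bp i ≠ 0)
            ⟨(kap : ℤ), fun z hz => (hBpsupp z hz).2⟩ hne
        have : ν = ν₀ := hν.unique (fwd_max ν₀ ⟨hν₀, hν₀ub⟩)
        rw [this]
        exact ⟨hν₀, hν₀ub⟩
      · push_neg at hne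
        exfalso
        apply hν.1
        rw [hB ν]
        apply Finset.sum_eq_zero
        intro j _
        rw [hne (ν - j), mul_zero]
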